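/- Let A be an m×n matrix over a field F with rank(A_{I×J}) = rank(A_{I×[n]}) < r, where I ⊆ [m] and J ⊆ [n] have size r. Then adj(A_{I×J}) · A_{I×[n]} = 0. -/

import Mathlib

/-- If `rank(A_{I×J}) = rank(A_{I×[n]}) < r`, then `adj(A_{I×J}) · A_{I×[n]} = 0`. -/
theorem stmt2 {F : Type*} [Field F] {m n r : ℕ}
    (A : Matrix (Fin m) (Fin n) F) (f : Fin r ↪ Fin m) (g : Fin r ↪ Fin n)
    (heq : (A.submatrix ⇑f ⇑g).rank = (A.submatrix ⇑f id).rank)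
    (hlt : (A.submatrix ⇑f id).rank < r) :
    (A.submatrix ⇑f ⇑g).adjugate * A.submatrix ⇑f id = 0 := by
  classical
  set B := A.submatrix ⇑f ⇑g with hB
  set M := A.submatrix ⇑f id with hM
  have hdet : B.det = 0 := by
    by_contra h
    have hu : IsUnit B := (Matrix.isUnit_iff_isUnit_det B).mpr (isUnit_iff_ne_zero.mpr h)
    have := Matrix.rank_of_isUnit B hu
    rw [heq, Fintype.card_fin] at this
    omega
  let E : Matrix (Fin n) (Fin r) F := fun i j => if i = g j then 1 else 0
  have hBE : B = M * E := by
    ext i j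
    rw [Matrix.mul_apply]
    simp [Matrix.mul_apply, E, hB, hM]
  have hle : LinearMap.range B.mulVecLin ≤ LinearMap.range M.mulVecLin := by
    rw [hBE, Matrix.mulVecLin_mul]
    exact LinearMap.range_comp_le_range _ _
  have hrange : LinearMap.range B.mulVecLin = LinearMap.range M.mulVecLin :=
    Submodule.eq_of_le_of_finrank_eq hle heq
  have hcol : ∀ j, ∃ x, B.mulVec x = fun i => M i j := by
    intro j
    have hmem : (fun i => M i j) ∈ LinearMap.range M.mulVecLin :=
      ⟨Pi.single j 1, by ext i; simp [Matrix.mulVecLin, Matrix.mulVec_single]⟩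
    rw [← hrange] at hmem
    obtain ⟨x, hx⟩ := hmem
    exact ⟨x, hx⟩
  choose X hX using hcol
  have hMX : M = B * (Matrix.of fun i j => X j i) := by
    ext i j
    have := congrFun (hX j) i
    simpa [Matrix.mul_apply, Matrix.mulVec, dotProduct] using this.symm
  rw [hMX, ← Matrix.mul_assoc, Matrix.adjugate_mul, hdet]
  simp
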